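/- The Shannon entropy of softmax(z/τ) is nondecreasing in the temperature τ > 0; equivalently, d/dτ H(softmax(z/τ)) ≥ 0 for all z ∈ ℝ^C and τ > 0. -/

import Mathlib

noncomputable def softmax {C : ℕ} (z : Fin C → ℝ) (j : Fin C) : ℝ :=
  Real.exp (z j) / ∑ k, Real.exp (z k)

noncomputable def shannonEntropy {C : ℕ} (p : Fin C → ℝ) : ℝ :=
  -∑ j, p j * Real.log (p j)

/-- The Shannon entropy of the temperature-scaled softmax is nondecreasing in τ:
its derivative with respect to τ is nonnegative for all τ > 0. -/
theorem entropy_softmax_deriv_nonneg {C : ℕ} (z : Fin C → ℝ) (τ : ℝ) (hτ : 0 < τ) :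
    0 ≤ deriv (fun t : ℝ => shannonEntropy (fun j => softmax (fun k => z k / t) j)) τ := by
  rcases Nat.eq_zero_or_pos C with hC | hC
  · subst hC
    simp [shannonEntropy, softmax]
  have hne : Nonempty (Fin C) := Fin.pos_iff_nonempty.mp hC
  set E : Fin C → ℝ := fun k => Real.exp (z k / τ) with hE
  have hEpos : ∀ k, 0 < E k := fun k => Real.exp_pos _
  set S : ℝ := ∑ k, E k with hSdef
  have hS : 0 < S := Finset.sum_pos (fun k _ => hEpos k) Finset.univ_nonempty
  set T : ℝ := ∑ k, E k * z k with hT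
  set Q : ℝ := ∑ k, E k * z k ^ 2 with hQ
  set L : ℝ := Real.log S with hL
  have hinv : HasDerivAt (fun t : ℝ => t⁻¹) (-(τ^2)⁻¹) τ := hasDerivAt_inv hτ.ne'
  have hdexp : ∀ j : Fin C, HasDerivAt (fun t : ℝ => Real.exp (z j / t))
      (E j * (z j * -(τ^2)⁻¹)) τ := by
    intro j
    have h1 : HasDerivAt (fun t : ℝ => z j / t) (z j * -(τ^2)⁻¹) τ := by
      simpa [div_eq_mul_inv] using hinv.const_mul (z j)
    simpa [hE] using h1.exp
  have hdS : HasDerivAt (fun t : ℝ => ∑ k, Real.exp (z k / t)) (-(T / τ^2)) τ := by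
    have h := HasDerivAt.fun_sum (u := Finset.univ) (fun k _ => hdexp k)
    refine h.congr_deriv ?_
    rw [hT, div_eq_mul_inv, Finset.sum_mul, ← Finset.sum_neg_distrib]
    exact Finset.sum_congr rfl fun i _ => by ring
  have hdp : ∀ j : Fin C, HasDerivAt
      (fun t : ℝ => Real.exp (z j / t) / ∑ k, Real.exp (z k / t))
      (E j * (T - z j * S) / (S^2 * τ^2)) τ := by
    intro j
    have h := (hdexp j).div hdS hS.ne'
    have hSτ : (∑ k, Real.exp (z k / τ)) = S := rfl
    have hEτ : Real.exp (z j / τ) = E j := rfl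
    rw [hSτ, hEτ] at h
    refine h.congr_deriv ?_
    field_simp
    ring
  have hppos : ∀ j, 0 < E j / S := fun j => div_pos (hEpos j) hS
  have hterm : ∀ j : Fin C, HasDerivAt
      (fun t : ℝ => (Real.exp (z j / t) / ∑ k, Real.exp (z k / t)) *
        Real.log (Real.exp (z j / t) / ∑ k, Real.exp (z k / t)))
      (E j * (T - z j * S) / (S^2 * τ^2) * Real.log (E j / S) +
        (E j / S) * ((E j / S)⁻¹ * (E j * (T - z j * S) / (S^2 * τ^2)))) τ := by
    intro j
    have hlog := (Real.hasDerivAt_log (hppos j).ne').comp τ (hdp j)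
    exact (hdp j).mul hlog
  have hfun : (fun t : ℝ => shannonEntropy (fun j => softmax (fun k => z k / t) j)) =
      fun t : ℝ => -(∑ j, (Real.exp (z j / t) / ∑ k, Real.exp (z k / t)) *
        Real.log (Real.exp (z j / t) / ∑ k, Real.exp (z k / t))) := by
    funext t
    simp [shannonEntropy, softmax]
  have hH : HasDerivAt (fun t : ℝ => shannonEntropy (fun j => softmax (fun k => z k / t) j))
      (-(∑ j, (E j * (T - z j * S) / (S^2 * τ^2) * Real.log (E j / S) +
        (E j / S) * ((E j / S)⁻¹ * (E j * (T - z j * S) / (S^2 * τ^2)))))) τ := by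
    rw [hfun]
    exact (HasDerivAt.fun_sum (fun j _ => hterm j)).neg
  rw [hH.deriv]
  have hlogp : ∀ j, Real.log (E j / S) = z j / τ - L := by
    intro j
    rw [Real.log_div (hEpos j).ne' hS.ne', hL, hE, Real.log_exp]
  have hsimp : ∀ j : Fin C,
      (E j * (T - z j * S) / (S^2 * τ^2) * Real.log (E j / S) +
        (E j / S) * ((E j / S)⁻¹ * (E j * (T - z j * S) / (S^2 * τ^2)))) =
      -(E j * (z j * S - T) * (z j - τ * (L - 1)) / (S^2 * τ^3)) := by
    intro j
    rw [hlogp j, mul_inv_cancel_left₀ (hppos j).ne']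
    field_simp
    ring
  rw [Finset.sum_congr rfl (fun j _ => hsimp j)]
  rw [Finset.sum_neg_distrib, neg_neg, ← Finset.sum_div]
  have key : (∑ j, E j * (z j * S - T) * (z j - τ * (L - 1))) = Q * S - T^2 := by
    have expand : ∀ j : Fin C, E j * (z j * S - T) * (z j - τ * (L - 1)) =
        (E j * z j ^ 2) * S - (E j * z j) * (τ * (L - 1) * S + T) + E j * (T * (τ * (L - 1))) :=
      fun j => by ring
    simp_rw [expand]
    rw [Finset.sum_add_distrib, Finset.sum_sub_distrib, ← Finset.sum_mul, ← Finset.sum_mul,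
      ← Finset.sum_mul, ← hQ, ← hT, ← hSdef]
    ring
  rw [key]
  have hcs : T ^ 2 ≤ Q * S := by
    have h := Finset.sum_mul_sq_le_sq_mul_sq Finset.univ (fun k => Real.sqrt (E k))
      (fun k => Real.sqrt (E k) * z k)
    have e1 : ∀ k : Fin C, Real.sqrt (E k) * (Real.sqrt (E k) * z k) = E k * z k := fun k => by
      rw [← mul_assoc, Real.mul_self_sqrt (hEpos k).le]
    have e2 : ∀ k : Fin C, Real.sqrt (E k) ^ 2 = E k := fun k => Real.sq_sqrt (hEpos k).le
    have e3 : ∀ k : Fin C, (Real.sqrt (E k) * z k) ^ 2 = E k * z k ^ 2 := fun k => by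
      rw [mul_pow, e2]
    simp_rw [e1, e2, e3] at h
    rw [hT, hQ, mul_comm]
    exact h
  apply div_nonneg (by linarith) (by positivity)
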